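/- arXiv:1205.1248 — 2 statements merged into one kernel-verified Lean document; each statement's English description precedes it below -/
import Mathlib

section
/- For every admissible list A of integers, the adjoint A* (the unique admissible list with e(A*) = 1 - e(A.reverse)) satisfies A** = A. -/
/-- Discriminant of a linear chain: determinant of the tridiagonal matrix. -/
def chainD : List ℤ → ℤ
  | [] => 1
  | [a] => a
  | a :: b :: L => a * chainD (b :: L) - chainD L

/-- A list is admissible if it is nonempty and all entries are at least 2. -/
def Admissible (A : List ℤ) : Prop := A ≠ [] ∧ ∀ x ∈ A, 2 ≤ x

/-- Inductance e(A) = d(Ā)/d(A). -/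
def inductance (A : List ℤ) : ℚ := (chainD A.tail : ℚ) / (chainD A : ℚ)

/-- Plumbing concatenation ⋆ of linear chains. -/
def pstar : List ℤ → List ℤ → List ℤ
  | [], B => B
  | A, [] => A
  | [a], b :: B => (a + b - 1) :: B
  | a :: A, B => a :: pstar A B

/-- TW n : the list of n copies of 2. -/
def TW (n : ℕ) : List ℤ := List.replicate n 2

/-- The 2×2 matrix product ∏ M(aᵢ), M(a) = [[a,-1],[1,0]], as a 4-tuple (p,q,r,s). -/
def dd : List ℤ → ℤ × ℤ × ℤ × ℤ
  | [] => (1, 0, 0, 1)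
  | a :: L => (a * (dd L).1 - (dd L).2.2.1, a * (dd L).2.1 - (dd L).2.2.2, (dd L).1, (dd L).2.1)

lemma dd_fst : ∀ L : List ℤ, (dd L).1 = chainD L
  | [] => rfl
  | [a] => by simp [dd, chainD]
  | a :: b :: L => by
    have h1 := dd_fst (b :: L)
    have h2 := dd_fst L
    simp only [dd, chainD] at *
    rw [h1]
    rcases L with _ | ⟨c, M⟩ <;> simp_all [dd, chainD]

lemma dd_det : ∀ L : List ℤ, (dd L).1 * (dd L).2.2.2 - (dd L).2.1 * (dd L).2.2.1 = 1
  | [] => rfl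
  | a :: L => by
    have := dd_det L
    simp only [dd]
    ring_nf
    ring_nf at this
    linarith

lemma dd_snoc : ∀ (L : List ℤ) (a : ℤ), dd (L ++ [a]) =
    ((dd L).1 * a + (dd L).2.1, -(dd L).1, (dd L).2.2.1 * a + (dd L).2.2.2, -(dd L).2.2.1)
  | [], a => by simp [dd]
  | b :: L, a => by
    have := dd_snoc L a
    simp only [List.cons_append, dd, this]
    refine Prod.ext ?_ (Prod.ext ?_ (Prod.ext ?_ ?_)) <;> simp [this] <;> ring

lemma dd_reverse : ∀ L : List ℤ, dd L.reverse = ((dd L).1, -(dd L).2.2.1, -(dd L).2.1, (dd L).2.2.2)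
  | [] => rfl
  | a :: L => by
    have h := dd_reverse L
    simp only [List.reverse_cons, dd_snoc, h, dd]
    refine Prod.ext ?_ (Prod.ext ?_ (Prod.ext ?_ ?_)) <;> simp [h] <;> ring

lemma dd_tail {a : ℤ} {M : List ℤ} : (dd (a :: M)).2.2.1 = chainD M := by
  simp [dd, dd_fst]

lemma dd_bounds : ∀ L : List ℤ, (∀ x ∈ L, 2 ≤ x) →
    0 < (dd L).1 ∧ 0 ≤ (dd L).2.2.1 ∧ (dd L).2.2.1 < (dd L).1
  | [], _ => by simp [dd]
  | a :: L, h => by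
    have ih := dd_bounds L (fun x hx => h x (List.mem_cons_of_mem a hx))
    have ha : 2 ≤ a := h a List.mem_cons_self
    simp only [dd]
    refine ⟨?_, ?_, ?_⟩ <;> nlinarith [ih.1, ih.2.1, ih.2.2]

lemma chainD_pos {L : List ℤ} (h : ∀ x ∈ L, 2 ≤ x) : 0 < chainD L := by
  rw [← dd_fst]; exact (dd_bounds L h).1

lemma chainD_tail_lt {L : List ℤ} (h : ∀ x ∈ L, 2 ≤ x) (hne : L ≠ []) :
    0 < chainD L.tail ∧ chainD L.tail < chainD L := by
  rcases L with _ | ⟨a, M⟩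
  · exact absurd rfl hne
  · have hb := dd_bounds (a :: M) h
    have := dd_tail (a := a) (M := M)
    have hM : 0 < chainD M := chainD_pos (fun x hx => h x (List.mem_cons_of_mem a hx))
    constructor
    · simpa using hM
    · have h2 := hb.2.2
      rw [dd_tail, dd_fst] at h2
      simpa using h2

lemma chainD_reverse (L : List ℤ) : chainD L.reverse = chainD L := by
  rw [← dd_fst, ← dd_fst, dd_reverse]

lemma chainD_reverse_tail {L : List ℤ} (hne : L ≠ []) :
    chainD L.reverse.tail = chainD L.dropLast := by
  rcases L.eq_nil_or_concat with rfl | ⟨M, a, rfl⟩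
  · exact absurd rfl hne
  · simp [List.reverse_concat, List.dropLast_concat, chainD_reverse]

lemma chainD_dropLast_eq {L : List ℤ} (hne : L ≠ []) :
    chainD L.dropLast = -(dd L).2.1 := by
  rw [← chainD_reverse_tail hne]
  have hrev : L.reverse ≠ [] := by simpa using hne
  rcases hR : L.reverse with _ | ⟨a, M⟩
  · exact absurd hR hrev
  · have : (dd (a :: M)).2.2.1 = chainD (a :: M).tail := by simp [dd_tail]
    rw [List.tail_cons, ← dd_tail (a := a) (M := M), ← hR, dd_reverse]

lemma chainD_bezout {L : List ℤ} (hne : L ≠ []) :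
    ∃ n : ℤ, chainD L.tail * chainD L.dropLast = chainD L * n + 1 := by
  rcases L with _ | ⟨a, M⟩
  · exact absurd rfl hne
  · refine ⟨-(dd (a :: M)).2.2.2, ?_⟩
    have hdet := dd_det (a :: M)
    have h1 : chainD (a :: M).tail = (dd (a :: M)).2.2.1 := by simp [dd_tail]
    have h2 := chainD_dropLast_eq (L := a :: M) (by simp)
    have h3 := dd_fst (a :: M)
    rw [h1, h2, ← h3]
    linarith [mul_comm ((dd (a::M)).2.1) ((dd (a::M)).2.2.1)]

lemma chainD_cons {a : ℤ} {M : List ℤ} (h : M ≠ []) :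
    chainD (a :: M) = a * chainD M - chainD M.tail := by
  rcases M with _ | ⟨b, N⟩
  · exact absurd rfl h
  · rfl

lemma inductance_inj : ∀ A B : List ℤ, (∀ x ∈ A, 2 ≤ x) → (∀ x ∈ B, 2 ≤ x) →
    A ≠ [] → B ≠ [] → inductance A = inductance B → A = B
  | [], _, _, _, hA, _, _ => absurd rfl hA
  | _ :: _, [], _, _, _, hB, _ => absurd rfl hB
  | a :: M, b :: N, hA, hB, _, _, h => by
    have hM2 : ∀ x ∈ M, 2 ≤ x := fun x hx => hA x (List.mem_cons_of_mem a hx)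
    have hN2 : ∀ x ∈ N, 2 ≤ x := fun x hx => hB x (List.mem_cons_of_mem b hx)
    have hx : 0 < chainD (a :: M) := chainD_pos hA
    have hy : 0 < chainD (b :: N) := chainD_pos hB
    have hu : 0 < chainD M := chainD_pos hM2
    have hv : 0 < chainD N := chainD_pos hN2
    -- cross-multiplied integer equation
    have hcross : chainD M * chainD (b :: N) = chainD N * chainD (a :: M) := by
      have h' := h
      unfold inductance at h'
      simp only [List.tail_cons] at h'
      rw [div_eq_div_iff (by exact_mod_cast hx.ne') (by exact_mod_cast hy.ne')] at h'
      exact_mod_cast h'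
    rcases hMe : M with _ | ⟨c, M'⟩ <;> rcases hNe : N with _ | ⟨d, N'⟩ <;>
        subst hMe <;> subst hNe
    · -- both singletons
      have : chainD (b :: ([] : List ℤ)) = chainD (a :: ([] : List ℤ)) := by
        simpa [chainD] using hcross
      simp only [chainD] at this
      rw [this]
    · -- M = [], N nonempty : contradiction
      exfalso
      have hNne : (d :: N') ≠ [] := by simp
      have hw := chainD_tail_lt hN2 hNne
      rw [chainD_cons hNne] at hcross
      simp only [chainD] at hcross
      set v := chainD (d :: N') with hv'
      set w := chainD (d :: N').tail with hw'
      set x := chainD (a :: ([] : List ℤ)) with hx'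
      -- hcross : 1 * (b * v - w) = v * x
      have hxa : x = a := by simp [hx', chainD]
      have hkey : w = (b - x) * v := by rw [hxa]; linear_combination -hcross
      rcases le_or_gt (b - x) 0 with hk | hk
      · nlinarith [hw.1, hv]
      · have h1 : (1 : ℤ) ≤ b - x := hk
        have h2 : 1 * v ≤ (b - x) * v := mul_le_mul_of_nonneg_right h1 hv.le
        linarith [hw.2]
    · -- N = [], M nonempty : contradiction
      exfalso
      have hMne : (c :: M') ≠ [] := by simp
      have hw := chainD_tail_lt hM2 hMne
      rw [chainD_cons hMne] at hcross
      simp only [chainD] at hcross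
      set u := chainD (c :: M') with hu'
      set w := chainD (c :: M').tail with hw'
      set y := chainD (b :: ([] : List ℤ)) with hy'
      have hyb : y = b := by simp [hy', chainD]
      have hkey : w = (a - y) * u := by rw [hyb]; linear_combination hcross
      rcases le_or_gt (a - y) 0 with hk | hk
      · nlinarith [hw.1, hu]
      · have h1 : (1 : ℤ) ≤ a - y := hk
        have h2 : 1 * u ≤ (a - y) * u := mul_le_mul_of_nonneg_right h1 hu.le
        linarith [hw.2]
    · -- both nonempty
      have hMne : (c :: M') ≠ [] := by simp
      have hNne : (d :: N') ≠ [] := by simp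
      have hu' := chainD_tail_lt hM2 hMne
      have hv' := chainD_tail_lt hN2 hNne
      rw [chainD_cons hMne, chainD_cons hNne] at hcross
      set u := chainD (c :: M') with hud
      set v := chainD (d :: N') with hvd
      set w1 := chainD (c :: M').tail with hw1d
      set w2 := chainD (d :: N').tail with hw2d
      have hE : (b - a) * (u * v) = u * w2 - v * w1 := by linear_combination hcross
      have huv : 0 < u * v := mul_pos hu hv
      have hP1 : u * w2 < u * v := mul_lt_mul_of_pos_left hv'.2 hu
      have hP2 : 0 < v * w1 := mul_pos hv hu'.1
      have hP3 : v * w1 < u * v := by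
        calc v * w1 < v * u := mul_lt_mul_of_pos_left hu'.2 hv
          _ = u * v := mul_comm v u
      have hP4 : 0 < u * w2 := mul_pos hu hv'.1
      have hab : b = a := by
        rcases lt_trichotomy a b with hlt | heq | hlt
        · exfalso
          have h1 : (1 : ℤ) ≤ b - a := by omega
          have h2 : 1 * (u * v) ≤ (b - a) * (u * v) := mul_le_mul_of_nonneg_right h1 huv.le
          linarith
        · omega
        · exfalso
          have h1 : (1 : ℤ) ≤ a - b := by omega
          have h2 : 1 * (u * v) ≤ (a - b) * (u * v) := mul_le_mul_of_nonneg_right h1 huv.le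
          linarith
      subst hab
      have heq2 : u * w2 = v * w1 := by linarith [hE]
      have hind : inductance (c :: M') = inductance (d :: N') := by
        unfold inductance
        rw [div_eq_div_iff (by exact_mod_cast hu.ne') (by exact_mod_cast hv.ne')]
        exact_mod_cast (by linarith [heq2] : chainD (c :: M').tail * chainD (d :: N')
          = chainD (d :: N').tail * chainD (c :: M'))
      have := inductance_inj (c :: M') (d :: N') hM2 hN2 hMne hNne hind
      rw [this]


theorem adjoint_adjoint (A As Ass : List ℤ) (hA : Admissible A) (hAs : Admissible As)
    (hAss : Admissible Ass)
    (h1 : inductance As = 1 - inductance A.reverse)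
    (h2 : inductance Ass = 1 - inductance As.reverse) :
    Ass = A := by
  obtain ⟨hAne, hA2⟩ := hA
  obtain ⟨hAsne, hAs2⟩ := hAs
  obtain ⟨hAssne, hAss2⟩ := hAss
  -- the key integer-arithmetic step
  have main : ∀ p q q' s r s' m n : ℤ, 0 < p → 0 < q → q < p → 0 < q' → q' < p →
      0 < s → 0 < r → r < s → 0 < s' → s' < s →
      r * p = s * (p - q') → q * q' = p * m + 1 → r * s' = s * n + 1 →
      s = p ∧ s' = p - q := by
    intro p q q' s r s' m n hp hq1 hq2 hq'1 hq'2 hs1 hr1 hr2 hs'1 hs'2 hrp hbezA hbezAs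
    have hdvd1 : p ∣ s :=
      ⟨q * (s - r) - s * m, by
        linear_combination q * (by linarith : s * q' = p * (s - r)) - s * hbezA⟩
    have hdvd2 : s ∣ p := ⟨s' * (p - q') - p * n, by linear_combination s' * hrp - p * hbezAs⟩
    have hsp : s = p := Int.dvd_antisymm hs1.le hp.le hdvd2 hdvd1
    subst hsp
    have hrq' : r = s - q' := by
      have hcancel : r * s = (s - q') * s := by linarith
      exact mul_right_cancel₀ hs1.ne' hcancel
    have hx : q' * s' = s * s' - s * n - 1 := by
      rw [hrq'] at hbezAs
      linarith
    obtain ⟨k, hk⟩ : s ∣ s' + q := ⟨q * s' - q * n - m * s', by linear_combination q * hx - s' * hbezA⟩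
    have hk1 : k = 1 := by
      have hb1 : 0 < s * k := by rw [← hk]; linarith
      have hb2 : s * k < 2 * s := by rw [← hk]; linarith
      nlinarith
    constructor
    · rfl
    · rw [hk1, mul_one] at hk
      omega
  set p := chainD A with hpd
  set q := chainD A.tail with hqd
  set q' := chainD A.dropLast with hq'd
  set s := chainD As with hsd
  set r := chainD As.tail with hrd
  set s' := chainD As.dropLast with hs'd
  have hArev2 : ∀ x ∈ A.reverse, 2 ≤ x := fun x hx => hA2 x (List.mem_reverse.mp hx)
  have hAsrev2 : ∀ x ∈ As.reverse, 2 ≤ x := fun x hx => hAs2 x (List.mem_reverse.mp hx)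
  have hArevne : A.reverse ≠ [] := by simpa using hAne
  have hAsrevne : As.reverse ≠ [] := by simpa using hAsne
  have hp : 0 < p := chainD_pos hA2
  have hs : 0 < s := chainD_pos hAs2
  have hq : 0 < q ∧ q < p := chainD_tail_lt hA2 hAne
  have hr : 0 < r ∧ r < s := chainD_tail_lt hAs2 hAsne
  have hq' : 0 < q' ∧ q' < p := by
    have := chainD_tail_lt hArev2 hArevne
    rwa [chainD_reverse_tail hAne, chainD_reverse] at this
  have hs' : 0 < s' ∧ s' < s := by
    have := chainD_tail_lt hAsrev2 hAsrevne
    rwa [chainD_reverse_tail hAsne, chainD_reverse] at this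
  have hpQ : (p : ℚ) ≠ 0 := by exact_mod_cast hp.ne'
  have hsQ : (s : ℚ) ≠ 0 := by exact_mod_cast hs.ne'
  -- translate h1 to an integer identity
  have hrp : r * p = s * (p - q') := by
    have h1' := h1
    unfold inductance at h1'
    rw [chainD_reverse_tail hAne, chainD_reverse, ← hrd, ← hsd, ← hq'd, ← hpd] at h1'
    have hz : (r : ℚ) * p = (s : ℚ) * (p - q') := by
      rw [div_eq_iff hsQ] at h1'
      rw [h1']
      field_simp
    exact_mod_cast hz
  obtain ⟨m, hbezA⟩ := chainD_bezout hAne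
  obtain ⟨n, hbezAs⟩ := chainD_bezout hAsne
  rw [← hqd, ← hq'd, ← hpd] at hbezA
  rw [← hrd, ← hs'd, ← hsd] at hbezAs
  obtain ⟨hsp, hs'q⟩ := main p q q' s r s' m n hp hq.1 hq.2 hq'.1 hq'.2 hs hr.1 hr.2
    hs'.1 hs'.2 hrp hbezA hbezAs
  -- conclude inductance Ass = inductance A
  have hfinal : inductance Ass = inductance A := by
    rw [h2]
    unfold inductance
    rw [chainD_reverse_tail hAsne, chainD_reverse, ← hs'd, ← hsd, hs'q, hsp, ← hqd, ← hpd]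
    field_simp
    push_cast; ring
  exact inductance_inj Ass A hAss2 hA2 hAssne hAne hfinal
end

section
/- Let A be an admissible list of integers and n a positive integer. Then the adjoint of the list A ++ [n+1] equals TW_n ⋆ A*, where TW_n is the list of n copies of 2 and ⋆ is the plumbing concatenation defined by [a_1,...,a_r] ⋆ [b_1,...,b_s] = [a_1,...,a_{r-1}, a_r + b_1 - 1, b_2,...,b_s]. -/
lemma chainD_pos_s11 : ∀ A : List ℤ, Admissible A →
    0 < chainD A.tail ∧ chainD A.tail < chainD A := by
  intro A
  induction A with
  | nil => rintro ⟨h, -⟩; exact absurd rfl h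
  | cons a L ih =>
    rintro ⟨-, h2⟩
    have ha : 2 ≤ a := h2 a List.mem_cons_self
    cases L with
    | nil => simp only [List.tail_cons, chainD]; omega
    | cons b M =>
      have hL : Admissible (b :: M) :=
        ⟨List.cons_ne_nil _ _, fun x hx => h2 x (List.mem_cons_of_mem _ hx)⟩
      obtain ⟨p1, p2⟩ := ih hL
      simp only [List.tail_cons] at p1 p2 ⊢
      have hd : chainD (a :: b :: M) = a * chainD (b :: M) - chainD M := rfl
      constructor
      · linarith
      · rw [hd]; nlinarith

lemma inductance_pos {A : List ℤ} (hA : Admissible A) : 0 < inductance A := by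
  obtain ⟨p1, p2⟩ := chainD_pos_s11 A hA
  exact div_pos (by exact_mod_cast p1) (by exact_mod_cast p1.trans p2)

lemma inductance_lt_one {A : List ℤ} (hA : Admissible A) : inductance A < 1 := by
  obtain ⟨p1, p2⟩ := chainD_pos_s11 A hA
  rw [inductance, div_lt_one (by exact_mod_cast p1.trans p2)]
  exact_mod_cast p2

lemma ind_cons (a : ℤ) {L : List ℤ} (hL : Admissible L) :
    inductance (a :: L) = 1 / ((a : ℚ) - inductance L) := by
  obtain ⟨b, M, rfl⟩ : ∃ b M, L = b :: M := by
    cases L with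
    | nil => exact absurd rfl hL.1
    | cons b M => exact ⟨b, M, rfl⟩
  obtain ⟨p1, p2⟩ := chainD_pos_s11 _ hL
  have hdL : (chainD (b :: M) : ℚ) ≠ 0 := by
    have h : (0:ℤ) < chainD (b :: M) := p1.trans p2
    exact_mod_cast h.ne'
  have key : (a:ℚ) - inductance (b :: M)
      = ((a * chainD (b :: M) - chainD M : ℤ) : ℚ) / (chainD (b :: M) : ℚ) := by
    rw [inductance]; push_cast; field_simp; rfl
  rw [key, one_div_div, inductance]
  simp only [List.tail_cons]
  rw [show chainD (a :: b :: M) = a * chainD (b :: M) - chainD M from rfl]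

lemma ind_base (a : ℤ) : inductance [a] = 1 / (a : ℚ) := by
  simp [inductance, chainD]

lemma admissible_tail {a : ℤ} {c : ℤ} {N : List ℤ} (h : Admissible (a :: c :: N)) :
    Admissible (c :: N) :=
  ⟨List.cons_ne_nil _ _, fun x hx => h.2 x (List.mem_cons_of_mem _ hx)⟩

lemma ind_cons' (a : ℤ) (L : List ℤ) (h : Admissible (a :: L)) :
    ∃ x : ℚ, 0 ≤ x ∧ x < 1 ∧ inductance (a :: L) = 1 / ((a:ℚ) - x) ∧
      ((L = [] ∧ x = 0) ∨ (Admissible L ∧ x = inductance L)) := by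
  cases L with
  | nil =>
    refine ⟨0, le_refl 0, one_pos, ?_, Or.inl ⟨rfl, rfl⟩⟩
    rw [ind_base]; norm_num
  | cons c N =>
    have hL : Admissible (c :: N) := admissible_tail h
    exact ⟨inductance (c :: N), (inductance_pos hL).le, inductance_lt_one hL,
      ind_cons a hL, Or.inr ⟨hL, rfl⟩⟩

lemma inductance_injective : ∀ A B : List ℤ, Admissible A → Admissible B →
    inductance A = inductance B → A = B := by
  intro A
  induction A with
  | nil => intro B hA; exact absurd rfl hA.1
  | cons a L ih =>
    intro B hA hB heq
    cases B with
    | nil => exact absurd rfl hB.1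
    | cons b M =>
      have ha : 2 ≤ a := hA.2 a List.mem_cons_self
      have hb : 2 ≤ b := hB.2 b List.mem_cons_self
      obtain ⟨x, hx0, hx1, hxe, hxc⟩ := ind_cons' a L hA
      obtain ⟨y, hy0, hy1, hye, hyc⟩ := ind_cons' b M hB
      have haq : (2:ℚ) ≤ (a:ℚ) := by exact_mod_cast ha
      have hbq : (2:ℚ) ≤ (b:ℚ) := by exact_mod_cast hb
      have hax : (0:ℚ) < (a:ℚ) - x := by linarith
      have hby : (0:ℚ) < (b:ℚ) - y := by linarith
      rw [hxe, hye] at heq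
      have h3 : (a:ℚ) - x = (b:ℚ) - y := by
        field_simp [hax.ne', hby.ne'] at heq
        linarith
      have hab : a = b := by
        have h4 : ((a - b : ℤ) : ℚ) = x - y := by push_cast; linarith
        have h5 : ((-1 : ℤ) : ℚ) < ((a - b : ℤ) : ℚ) := by rw [h4]; push_cast; linarith
        have h6 : ((a - b : ℤ) : ℚ) < ((1 : ℤ) : ℚ) := by rw [h4]; push_cast; linarith
        have h5' := Int.cast_lt.mp h5
        have h6' := Int.cast_lt.mp h6
        omega
      subst hab
      have hxy : x = y := by linarith
      rcases hxc with ⟨hL, hx⟩ | ⟨hLadm, hx⟩ <;> rcases hyc with ⟨hM, hy⟩ | ⟨hMadm, hy⟩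
      · rw [hL, hM]
      · exfalso; have := inductance_pos hMadm; rw [hx, hy] at hxy; linarith
      · exfalso; have := inductance_pos hLadm; rw [hx, hy] at hxy; linarith
      · have : L = M := ih M hLadm hMadm (by rw [← hx, ← hy, hxy])
        rw [this]

lemma key_lemma : ∀ n : ℕ, 1 ≤ n → ∀ As : List ℤ, Admissible As →
    Admissible (pstar (TW n) As) ∧
    inductance (pstar (TW n) As) = 1 - 1 / ((n : ℚ) + inductance As) := by
  intro n
  induction n with
  | zero => intro h; omega
  | succ m ih =>
    intro _ As hAs
    obtain ⟨b, M, rfl⟩ : ∃ b M, As = b :: M := by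
      cases As with
      | nil => exact absurd rfl hAs.1
      | cons b M => exact ⟨b, M, rfl⟩
    have hb : 2 ≤ b := hAs.2 b List.mem_cons_self
    have hbq : (2:ℚ) ≤ (b:ℚ) := by exact_mod_cast hb
    cases m with
    | zero =>
      have hps : pstar (TW 1) (b :: M) = (2 + b - 1) :: M := by
        simp [TW, pstar]
      have hadm : Admissible ((2 + b - 1) :: M) := by
        refine ⟨List.cons_ne_nil _ _, ?_⟩
        intro x hx
        rcases List.mem_cons.mp hx with rfl | hx
        · omega
        · exact hAs.2 x (List.mem_cons_of_mem _ hx)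
      rw [hps]
      refine ⟨hadm, ?_⟩
      have h1 : ((2 + b - 1 : ℤ) : ℚ) = (b:ℚ) + 1 := by push_cast; ring
      have hc : ((0 + 1 : ℕ) : ℚ) = 1 := by norm_num
      cases M with
      | nil =>
        rw [ind_base, ind_base, h1, hc]
        have hb0 : (b:ℚ) ≠ 0 := by linarith
        have hb1 : (b:ℚ) + 1 ≠ 0 := by linarith
        have e1 : (1:ℚ) + 1 / (b:ℚ) = ((b:ℚ) + 1) / (b:ℚ) := by
          rw [one_add_div hb0]
        rw [e1, one_div_div, eq_sub_iff_add_eq, ← add_div,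
          div_eq_iff hb1]
        ring
      | cons c N =>
        have hM : Admissible (c :: N) := admissible_tail hAs
        rw [ind_cons _ hM, ind_cons _ hM, h1, hc]
        set x := inductance (c :: N) with hxdef
        have hx0 : 0 < x := inductance_pos hM
        have hx1 : x < 1 := inductance_lt_one hM
        have d1 : (b:ℚ) - x ≠ 0 := by linarith
        have d2 : (b:ℚ) + 1 - x ≠ 0 := by linarith
        have e1 : (1:ℚ) + 1 / ((b:ℚ) - x) = ((b:ℚ) + 1 - x) / ((b:ℚ) - x) := by
          rw [one_add_div d1]; ring_nf
        rw [e1, one_div_div, eq_sub_iff_add_eq, ← add_div,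
          div_eq_iff d2]
        ring
    | succ k =>
      obtain ⟨hadm, hind⟩ := ih (by omega) (b :: M) hAs
      have hps : pstar (TW (k + 2)) (b :: M) = 2 :: pstar (TW (k + 1)) (b :: M) := by
        simp [TW, List.replicate_succ, pstar]
      rw [hps]
      have hadm2 : Admissible (2 :: pstar (TW (k + 1)) (b :: M)) := by
        refine ⟨List.cons_ne_nil _ _, ?_⟩
        intro x hx
        rcases List.mem_cons.mp hx with rfl | hx
        · exact le_refl 2
        · exact hadm.2 x hx
      refine ⟨hadm2, ?_⟩
      have hc1 : ((k + 1 : ℕ) : ℚ) = (k:ℚ) + 1 := by push_cast; ring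
      have hc2 : ((k + 1 + 1 : ℕ) : ℚ) = (k:ℚ) + 2 := by push_cast; ring
      rw [ind_cons 2 hadm, hind, hc1, hc2]
      set x := inductance (b :: M) with hxdef
      have hx0 : 0 < x := inductance_pos hAs
      have hx1 : x < 1 := inductance_lt_one hAs
      have hk : (0:ℚ) ≤ (k:ℚ) := Nat.cast_nonneg k
      have d1 : (k:ℚ) + 1 + x ≠ 0 := by linarith
      have d2 : (k:ℚ) + 2 + x ≠ 0 := by linarith
      have e0 : (2:ℚ) - (1 - 1 / ((k:ℚ) + 1 + x)) = 1 + 1 / ((k:ℚ) + 1 + x) := by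
        ring
      have e1 : (1:ℚ) + 1 / ((k:ℚ) + 1 + x) = ((k:ℚ) + 2 + x) / ((k:ℚ) + 1 + x) := by
        rw [one_add_div d1]; ring_nf
      push_cast
      rw [e0, e1, one_div_div, eq_sub_iff_add_eq, ← add_div,
        div_eq_iff d2]
      ring

theorem adjoint_append (A As C : List ℤ) (n : ℕ) (hn : 0 < n)
    (hA : Admissible A) (hAs : Admissible As)
    (h1 : inductance As = 1 - inductance A.reverse)
    (hC : Admissible C)
    (h2 : inductance C = 1 - inductance (A ++ [(n : ℤ) + 1]).reverse) :
    C = pstar (TW n) As := by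
  have hArev : Admissible A.reverse := by
    refine ⟨?_, fun x hx => hA.2 x (List.mem_reverse.mp hx)⟩
    simp [hA.1]
  have hrev : (A ++ [(n : ℤ) + 1]).reverse = ((n : ℤ) + 1) :: A.reverse := by
    simp
  obtain ⟨hadm, hind⟩ := key_lemma n hn As hAs
  apply inductance_injective C _ hC hadm
  rw [h2, hrev, ind_cons _ hArev, hind, h1]
  push_cast
  ring_nf
end
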